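/- Let A be an n×n generalized Cartan matrix. If λ ∈ ℝⁿ satisfies (Aλ)ᵢ ≤ 0 for every i = 1,…,n, then for every w ∈ W one has w(λ) − λ ∈ C, i.e. every coordinate of w(λ) − λ is nonnegative. -/

import Mathlib

/-- `A` is a generalized Cartan matrix. -/
def IsGCM {n : ℕ} (A : Matrix (Fin n) (Fin n) ℝ) : Prop :=
  (∀ i, A i i = 2) ∧
  (∀ i j, i ≠ j → A i j ≤ 0 ∧ ∃ m : ℤ, A i j = (m : ℝ)) ∧
  (∀ i j, A i j = 0 → A j i = 0)

/-- The simple reflection `sᵢ(v) = v − (Av)ᵢ eᵢ`, as an endomorphism of `ℝⁿ`. -/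
def simpleRefl {n : ℕ} (A : Matrix (Fin n) (Fin n) ℝ) (i : Fin n) :
    Function.End (Fin n → ℝ) :=
  fun v : Fin n → ℝ => v - A.mulVec v i • (Pi.single i (1 : ℝ) : Fin n → ℝ)

/-- The Weyl group in simple-root coordinates: the collection of all compositions
of simple reflections (each `sᵢ` is an involution, so this monoid of maps is the
group generated by the `sᵢ`). -/
def weylGroup {n : ℕ} (A : Matrix (Fin n) (Fin n) ℝ) :
    Submonoid (Function.End (Fin n → ℝ)) :=
  Submonoid.closure (Set.range (simpleRefl A))

/-- The nonnegative orthant `C = {v : v ≥ 0}`. -/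
def posOrthant (n : ℕ) : Set (Fin n → ℝ) := {v | ∀ i, 0 ≤ v i}

/-- The positive cone `Q = ⋂_{w ∈ W} w(C)`. -/
def posCone {n : ℕ} (A : Matrix (Fin n) (Fin n) ℝ) : Set (Fin n → ℝ) :=
  ⋂ w ∈ weylGroup A, w '' posOrthant n

namespace WOG

variable {n : ℕ} (A : Matrix (Fin n) (Fin n) ℝ)

/-- standard basis vector -/
noncomputable abbrev ee (i : Fin n) : Fin n → ℝ := Pi.single i 1

lemma srefl_apply (i : Fin n) (v : Fin n → ℝ) (k : Fin n) :
    simpleRefl A i v k = v k - A.mulVec v i * (if k = i then 1 else 0) := by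
  simp [simpleRefl, Pi.single_apply]

lemma mulVec_srefl (i : Fin n) (v : Fin n → ℝ) (k : Fin n) :
    A.mulVec (simpleRefl A i v) k = A.mulVec v k - A.mulVec v i * A k i := by
  simp [simpleRefl, Matrix.mulVec_sub, Matrix.mulVec_smul, Matrix.mulVec_single]

lemma srefl_add (i : Fin n) (v u : Fin n → ℝ) :
    simpleRefl A i (v + u) = simpleRefl A i v + simpleRefl A i u := by
  funext k
  simp only [srefl_apply, Matrix.mulVec_add, Pi.add_apply]
  split <;> ring

lemma srefl_smul (i : Fin n) (c : ℝ) (v : Fin n → ℝ) :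
    simpleRefl A i (c • v) = c • simpleRefl A i v := by
  funext k
  simp only [srefl_apply, Matrix.mulVec_smul, Pi.smul_apply, smul_eq_mul]
  split <;> ring

lemma srefl_srefl (h2 : A i i = 2) (v : Fin n → ℝ) :
    simpleRefl A i (simpleRefl A i v) = v := by
  funext k
  rw [srefl_apply, mulVec_srefl, srefl_apply, h2]
  by_cases hk : k = i <;> simp [hk] <;> ring

/-- product of simple reflections along a word -/
def prodW (l : List (Fin n)) : Function.End (Fin n → ℝ) := (l.map (simpleRefl A)).prod

@[simp] lemma prodW_nil : prodW A ([] : List (Fin n)) = 1 := rfl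

lemma prodW_cons (i : Fin n) (l : List (Fin n)) :
    prodW A (i :: l) = simpleRefl A i * prodW A l := by
  simp [prodW]

lemma prodW_cons_apply (i : Fin n) (l : List (Fin n)) (v : Fin n → ℝ) :
    prodW A (i :: l) v = simpleRefl A i (prodW A l v) := by
  rw [prodW_cons]; rfl

lemma prodW_append (l₁ l₂ : List (Fin n)) :
    prodW A (l₁ ++ l₂) = prodW A l₁ * prodW A l₂ := by
  simp [prodW]

lemma prodW_add (l : List (Fin n)) (v u : Fin n → ℝ) :
    prodW A l (v + u) = prodW A l v + prodW A l u := by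
  induction l with
  | nil => rfl
  | cons i l ih => rw [prodW_cons_apply, prodW_cons_apply, prodW_cons_apply, ih, srefl_add]

lemma prodW_smul (l : List (Fin n)) (c : ℝ) (v : Fin n → ℝ) :
    prodW A l (c • v) = c • prodW A l v := by
  induction l with
  | nil => rfl
  | cons i l ih => rw [prodW_cons_apply, prodW_cons_apply, ih, srefl_smul]

/-- length of `w` : minimal word length -/
noncomputable def len (w : Function.End (Fin n → ℝ)) : ℕ :=
  sInf {m | ∃ l : List (Fin n), l.length = m ∧ prodW A l = w}

lemma len_le {w : Function.End (Fin n → ℝ)} {l : List (Fin n)} (h : prodW A l = w) :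
    len A w ≤ l.length := Nat.sInf_le ⟨l, rfl, h⟩

lemma exists_reduced {w : Function.End (Fin n → ℝ)} (h : ∃ l, prodW A l = w) :
    ∃ l : List (Fin n), l.length = len A w ∧ prodW A l = w := by
  obtain ⟨l, hl⟩ := h
  have : {m | ∃ l : List (Fin n), l.length = m ∧ prodW A l = w}.Nonempty := ⟨l.length, l, rfl, hl⟩
  obtain ⟨l', h1, h2⟩ := Nat.sInf_mem this
  exact ⟨l', h1, h2⟩

/-- dihedral length: minimal `{i,j}`-word length -/
noncomputable def lenD (i j : Fin n) (w : Function.End (Fin n → ℝ)) : ℕ :=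
  sInf {m | ∃ l : List (Fin n), (∀ y ∈ l, y = i ∨ y = j) ∧ l.length = m ∧ prodW A l = w}

lemma lenD_le {i j : Fin n} {w : Function.End (Fin n → ℝ)} {l : List (Fin n)}
    (hl : ∀ y ∈ l, y = i ∨ y = j) (h : prodW A l = w) :
    lenD A i j w ≤ l.length := Nat.sInf_le ⟨l, hl, rfl, h⟩

end WOG

namespace WOG
variable {n : ℕ} (A : Matrix (Fin n) (Fin n) ℝ)

/-- alternating word of length `m` in letters `i, j`, ending with `j`. -/
def altW (i j : Fin n) : ℕ → List (Fin n)
  | 0 => []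
  | m + 1 => (if Even m then j else i) :: altW i j m

lemma altW_letters (i j : Fin n) (m : ℕ) : ∀ y ∈ altW i j m, y = i ∨ y = j := by
  induction m with
  | zero => simp [altW]
  | succ m ih =>
    intro y hy
    rw [altW] at hy
    rcases List.mem_cons.1 hy with h | h
    · split at h <;> simp [h]
    · exact ih y h

lemma altW_concat (i j : Fin n) (m : ℕ) :
    altW j i (m + 1) = altW i j m ++ [i] := by
  induction m with
  | zero => simp [altW]
  | succ m ih =>
    rw [altW, ih, altW]
    have h : (if Even (m + 1) then i else j) = (if Even m then j else i) := by
      rcases Nat.even_or_odd m with h | h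
      · simp [h, Nat.even_add_one]
      · simp [Nat.not_even_iff_odd.2 h, Nat.even_add_one, Nat.not_even_iff_odd]
    rw [h]
    rfl

/-- coefficient pair after applying `m` letters (from the right) of the alternating word
ending in `j` to `e i`.  `a = -A i j`, `b = -A j i`. -/
noncomputable def PQ (a b : ℝ) : ℕ → ℝ × ℝ
  | 0 => (1, 0)
  | r + 1 =>
      if Even r then ((PQ a b r).1, b * (PQ a b r).1 - (PQ a b r).2)
      else (a * (PQ a b r).2 - (PQ a b r).1, (PQ a b r).2)

lemma mulVec_combo (i j : Fin n) (P Q : ℝ) (k : Fin n) :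
    A.mulVec (P • ee i + Q • ee j) k = P * A k i + Q * A k j := by
  simp [Matrix.mulVec_add, Matrix.mulVec_smul, Matrix.mulVec_single, ee]

lemma srefl_combo_i (i j : Fin n) (hij : i ≠ j) (h2 : A i i = 2) (P Q : ℝ) :
    simpleRefl A i (P • ee i + Q • ee j) =
      ((-A i j) * Q - P) • ee i + Q • ee j := by
  funext k
  rw [srefl_apply, mulVec_combo, h2]
  by_cases hk : k = i
  · subst hk
    simp [ee, Pi.single_apply, hij.symm]
    ring
  · by_cases hk' : k = j
    · subst hk'
      simp [ee, Pi.single_apply, hij, hk]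
    · simp [ee, Pi.single_apply, hk, hk']

lemma srefl_combo_j (i j : Fin n) (hij : i ≠ j) (h2 : A j j = 2) (P Q : ℝ) :
    simpleRefl A j (P • ee i + Q • ee j) =
      P • ee i + ((-A j i) * P - Q) • ee j := by
  funext k
  rw [srefl_apply, mulVec_combo, h2]
  by_cases hk : k = j
  · subst hk
    simp [ee, Pi.single_apply, hij.symm, hij]
    ring
  · by_cases hk' : k = i
    · subst hk'
      simp [ee, Pi.single_apply, hij, hk]
    · simp [ee, Pi.single_apply, hk, hk']

lemma altW_apply (i j : Fin n) (hij : i ≠ j) (h2i : A i i = 2) (h2j : A j j = 2) (m : ℕ) :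
    prodW A (altW i j m) (ee i) =
      (PQ (-A i j) (-A j i) m).1 • ee i + (PQ (-A i j) (-A j i) m).2 • ee j := by
  induction m with
  | zero =>
    show Pi.single i 1 = _
    simp [PQ, ee]
  | succ m ih =>
    rw [altW, prodW_cons_apply, ih, PQ]
    rcases Nat.even_or_odd m with h | h
    · rw [if_pos h, if_pos h, srefl_combo_j A i j hij h2j]
    · rw [if_neg (Nat.not_even_iff_odd.2 h), if_neg (Nat.not_even_iff_odd.2 h),
        srefl_combo_i A i j hij h2i]

end WOG

namespace WOG
variable {n : ℕ} (A : Matrix (Fin n) (Fin n) ℝ)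

lemma prodW_nil_apply (v : Fin n → ℝ) : prodW A [] v = v := rfl

lemma PQ_one (a b : ℝ) : PQ a b 1 = (1, b) := by norm_num [PQ]
lemma PQ_two (a b : ℝ) : PQ a b 2 = (a * b - 1, b) := by simp only [PQ]; norm_num [Nat.even_add_one]
lemma PQ_three (a b : ℝ) : PQ a b 3 = (a * b - 1, b * (a * b - 1) - b) := by
  simp only [PQ]; norm_num [Nat.even_add_one]
lemma PQ_four (a b : ℝ) :
    PQ a b 4 = (a * (b * (a * b - 1) - b) - (a * b - 1), b * (a * b - 1) - b) := by
  simp only [PQ]; norm_num [Nat.even_add_one]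
lemma PQ_five (a b : ℝ) :
    PQ a b 5 = (a * (b * (a * b - 1) - b) - (a * b - 1),
      b * (a * (b * (a * b - 1) - b) - (a * b - 1)) - (b * (a * b - 1) - b)) := by
  simp only [PQ]; norm_num [Nat.even_add_one]

variable {i j : Fin n}

lemma braid0 (hij : i ≠ j) (h2i : A i i = 2) (h2j : A j j = 2)
    (hz1 : A i j = 0) (hz2 : A j i = 0) :
    prodW A (altW i j 2) = prodW A (altW j i 2) := by
  show prodW A [i, j] = prodW A [j, i]
  funext v k
  simp only [prodW_cons_apply, prodW_nil_apply, srefl_apply, mulVec_srefl]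
  by_cases hk : k = i
  · simp only [hk, hij, hz1, hz2, if_true, if_false, eq_self_iff_true, if_neg hij]
    ring
  · by_cases hk' : k = j
    · simp only [hk', hz1, hz2, if_neg hij.symm, eq_self_iff_true, if_true]
      ring
    · simp [hk, hk']

lemma braid1 (hij : i ≠ j) (h2i : A i i = 2) (h2j : A j j = 2)
    (hab : A i j * A j i = 1) :
    prodW A (altW i j 3) = prodW A (altW j i 3) := by
  show prodW A [j, i, j] = prodW A [i, j, i]
  funext v k
  simp only [prodW_cons_apply, prodW_nil_apply, srefl_apply, mulVec_srefl, h2i, h2j]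
  by_cases hk : k = i
  · simp only [hk, eq_self_iff_true, if_true, if_neg hij]
    linear_combination (A.mulVec v i) * hab
  · by_cases hk' : k = j
    · simp only [hk', eq_self_iff_true, if_true, if_neg hij.symm]
      linear_combination (-(A.mulVec v j)) * hab
    · simp [hk, hk']

lemma braid2 (hij : i ≠ j) (h2i : A i i = 2) (h2j : A j j = 2)
    (hab : A i j * A j i = 2) :
    prodW A (altW i j 4) = prodW A (altW j i 4) := by
  show prodW A [i, j, i, j] = prodW A [j, i, j, i]
  funext v k
  simp only [prodW_cons_apply, prodW_nil_apply, srefl_apply, mulVec_srefl, h2i, h2j]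
  by_cases hk : k = i
  · simp only [hk, eq_self_iff_true, if_true, if_neg hij]
    linear_combination (A.mulVec v j * A i j) * hab
  · by_cases hk' : k = j
    · simp only [hk', eq_self_iff_true, if_true, if_neg hij.symm]
      linear_combination (-(A.mulVec v i * A j i)) * hab
    · simp [hk, hk']

lemma braid3 (hij : i ≠ j) (h2i : A i i = 2) (h2j : A j j = 2)
    (hab : A i j * A j i = 3) :
    prodW A (altW i j 6) = prodW A (altW j i 6) := by
  show prodW A [i, j, i, j, i, j] = prodW A [j, i, j, i, j, i]
  funext v k
  simp only [prodW_cons_apply, prodW_nil_apply, srefl_apply, mulVec_srefl, h2i, h2j]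
  by_cases hk : k = i
  · simp only [hk, eq_self_iff_true, if_true, if_neg hij]
    linear_combination (A.mulVec v j * A i j * (A i j * A j i - 1)) * hab
  · by_cases hk' : k = j
    · simp only [hk', eq_self_iff_true, if_true, if_neg hij.symm]
      linear_combination (-(A.mulVec v i * A j i * (A i j * A j i - 1))) * hab
    · simp [hk, hk']

end WOG

namespace WOG
variable {n : ℕ} (A : Matrix (Fin n) (Fin n) ℝ)

lemma PQ_succ_even (a b : ℝ) (r : ℕ) (h : Even r) :
    PQ a b (r + 1) = ((PQ a b r).1, b * (PQ a b r).1 - (PQ a b r).2) := by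
  rw [PQ, if_pos h]

lemma PQ_succ_odd (a b : ℝ) (r : ℕ) (h : ¬ Even r) :
    PQ a b (r + 1) = (a * (PQ a b r).2 - (PQ a b r).1, (PQ a b r).2) := by
  rw [PQ, if_neg h]

lemma PQ_inv_big (a b : ℝ) (ha : 0 ≤ a) (hb : 0 ≤ b) (ht : 4 ≤ a * b) :
    ∀ r, 0 ≤ (PQ a b (2 * r)).1 ∧ 0 ≤ (PQ a b (2 * r)).2 ∧
      2 * (PQ a b (2 * r)).2 ≤ b * (PQ a b (2 * r)).1 := by
  intro r
  induction r with
  | zero => refine ⟨by norm_num [PQ], by norm_num [PQ], by simpa [PQ] using hb⟩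
  | succ r ih =>
    obtain ⟨hp, hq, hbq⟩ := ih
    have e1 : 2 * (r + 1) = (2 * r + 1) + 1 := by ring
    rw [e1, PQ_succ_odd a b _ (by simp [Nat.even_add_one]),
      PQ_succ_even a b _ (by simp)]
    set p := (PQ a b (2 * r)).1 with hpdef
    set q := (PQ a b (2 * r)).2 with hqdef
    have hbp : 0 ≤ b * p - q := by nlinarith
    have h4 : 0 ≤ (a * b - 4) * p := mul_nonneg (by linarith) hp
    have h5 : 0 ≤ (a * b - 4) * (b * p - q) := mul_nonneg (by linarith) hbp
    refine ⟨?_, ?_, ?_⟩ <;> dsimp only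
    · nlinarith [mul_nonneg ha hq]
    · nlinarith
    · nlinarith [mul_nonneg hb hp]

lemma PQ_nonneg_big (a b : ℝ) (ha : 0 ≤ a) (hb : 0 ≤ b) (ht : 4 ≤ a * b) (m : ℕ) :
    0 ≤ (PQ a b m).1 ∧ 0 ≤ (PQ a b m).2 := by
  rcases Nat.even_or_odd m with h | h
  · obtain ⟨r, hr⟩ := h
    have : m = 2 * r := by omega
    subst this
    exact ⟨(PQ_inv_big a b ha hb ht r).1, (PQ_inv_big a b ha hb ht r).2.1⟩
  · obtain ⟨r, hr⟩ := h
    subst hr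
    obtain ⟨hp, hq, hbq⟩ := PQ_inv_big a b ha hb ht r
    rw [PQ_succ_even a b _ (by simp)]
    refine ⟨hp, ?_⟩
    show (0:ℝ) ≤ b * (PQ a b (2 * r)).1 - (PQ a b (2 * r)).2
    linarith

lemma srefl_mul_self (i : Fin n) (h2 : A i i = 2) :
    simpleRefl A i * simpleRefl A i = 1 := by
  funext v
  exact srefl_srefl A h2 v

lemma prodW_cancel (i : Fin n) (h2 : A i i = 2) (l : List (Fin n)) :
    prodW A (i :: i :: l) = prodW A l := by
  rw [prodW_cons, prodW_cons, ← mul_assoc, srefl_mul_self A i h2, one_mul]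

variable {i j : Fin n}

lemma letter_parity (i j : Fin n) (m : ℕ) (hm : 1 ≤ m) :
    (if Even m then j else i) = (if Even (m - 1) then i else j) := by
  obtain ⟨m', rfl⟩ : ∃ m', m = m' + 1 := ⟨m - 1, by omega⟩
  simp only [Nat.add_sub_cancel]
  rcases Nat.even_or_odd m' with h | h
  · simp [h, Nat.even_add_one]
  · simp [Nat.not_even_iff_odd.2 h, Nat.even_add_one]

lemma shorten (h2 : ∀ k, A k k = 2) (mt : ℕ) (hmt : 1 ≤ mt)
    (hbr : prodW A (altW i j mt) = prodW A (altW j i mt)) :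
    prodW A (altW i j (mt + 1)) = prodW A (altW j i (mt - 1)) := by
  have h1 : altW i j (mt + 1) = (if Even mt then j else i) :: altW i j mt := rfl
  have hmt' : (mt - 1) + 1 = mt := by omega
  have h2' : altW j i mt = (if Even (mt - 1) then i else j) :: altW j i (mt - 1) := by
    rw [← hmt']; rfl
  rw [h1, prodW_cons, hbr, h2', prodW_cons, ← mul_assoc,
    letter_parity i j mt hmt]
  rcases Nat.even_or_odd (mt - 1) with h | h
  · rw [if_pos h, srefl_mul_self A i (h2 i), one_mul]
  · rw [if_neg (Nat.not_even_iff_odd.2 h), srefl_mul_self A j (h2 j), one_mul]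

/-- prepending a letter to an alternating word -/
lemma step_helper (hij : i ≠ j) (h2 : ∀ k, A k k = 2) (mt : ℕ) (hmt : 1 ≤ mt)
    (hbr : prodW A (altW i j mt) = prodW A (altW j i mt))
    (x : Fin n) (hx : x = i ∨ x = j) (m : ℕ) (hm : m ≤ mt) :
    ∃ m', m' ≤ m + 1 ∧ m' ≤ mt ∧
      (simpleRefl A x * prodW A (altW i j m) = prodW A (altW i j m') ∨
       simpleRefl A x * prodW A (altW i j m) = prodW A (altW j i m')) := by
  set y := if Even m then j else i with hy
  by_cases hxy : x = y
  · subst hxy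
    have hext : simpleRefl A y * prodW A (altW i j m) = prodW A (altW i j (m + 1)) := by
      rw [← prodW_cons]; rfl
    by_cases hmm : m = mt
    · subst hmm
      refine ⟨m - 1, by omega, by omega, Or.inr ?_⟩
      rw [hext, shorten A h2 m hmt hbr]
    · exact ⟨m + 1, le_refl _, by omega, Or.inl hext⟩
  · match m, hy with
    | 0, hy =>
      have hxi : x = i := by
        rcases hx with h | h
        · exact h
        · exact absurd (h.trans (by simp [hy])) hxy
      refine ⟨1, by omega, hmt, Or.inr ?_⟩
      have : altW j i 1 = [x] := by simp [altW, hxi]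
      rw [this, prodW_cons, prodW_nil]
      simp [altW, prodW]
    | (m'' + 1), hy =>
      have hhead : altW i j (m'' + 1) = (if Even m'' then j else i) :: altW i j m'' := rfl
      have hxh : x = (if Even m'' then j else i) := by
        have hyv : y = if Even (m'' + 1) then j else i := hy
        rcases Nat.even_or_odd m'' with h | h
        · rcases hx with h' | h'
          · rw [if_pos h]
            rw [hyv, if_neg (by simp [Nat.even_add_one, h])] at hxy
            exact absurd h' hxy
          · rw [if_pos h]; exact h'
        · rcases hx with h' | h'
          · rw [if_neg (Nat.not_even_iff_odd.2 h)]; exact h'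
          · rw [if_neg (Nat.not_even_iff_odd.2 h)]
            rw [hyv, if_pos (by simp [Nat.even_add_one, Nat.not_even_iff_odd.2 h])] at hxy
            exact absurd h' hxy
    
      refine ⟨m'', by omega, by omega, Or.inl ?_⟩
      rw [hhead, ← hxh, prodW_cons, ← mul_assoc]
      rcases hx with h' | h' <;> subst h'
      · rw [srefl_mul_self A x (h2 x), one_mul]
      · rw [srefl_mul_self A x (h2 x), one_mul]

/-- the same, without the braid bound (used when `ab ≥ 4`) -/
lemma step_helper_free (hij : i ≠ j) (h2 : ∀ k, A k k = 2)
    (x : Fin n) (hx : x = i ∨ x = j) (m : ℕ) :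
    ∃ m', m' ≤ m + 1 ∧
      (simpleRefl A x * prodW A (altW i j m) = prodW A (altW i j m') ∨
       simpleRefl A x * prodW A (altW i j m) = prodW A (altW j i m')) := by
  set y := if Even m then j else i with hy
  by_cases hxy : x = y
  · subst hxy
    have hext : simpleRefl A y * prodW A (altW i j m) = prodW A (altW i j (m + 1)) := by
      rw [← prodW_cons]; rfl
    exact ⟨m + 1, le_refl _, Or.inl hext⟩
  · match m, hy with
    | 0, hy =>
      have hxi : x = i := by
        rcases hx with h | h
        · exact h
        · exact absurd (h.trans (by simp [hy])) hxy
      refine ⟨1, by omega, Or.inr ?_⟩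
      have : altW j i 1 = [x] := by simp [altW, hxi]
      rw [this, prodW_cons, prodW_nil]
      simp [altW, prodW]
    | (m'' + 1), hy =>
      have hhead : altW i j (m'' + 1) = (if Even m'' then j else i) :: altW i j m'' := rfl
      have hxh : x = (if Even m'' then j else i) := by
        have hyv : y = if Even (m'' + 1) then j else i := hy
        rcases Nat.even_or_odd m'' with h | h
        · rcases hx with h' | h'
          · rw [if_pos h]
            rw [hyv, if_neg (by simp [Nat.even_add_one, h])] at hxy
            exact absurd h' hxy
          · rw [if_pos h]; exact h'
        · rcases hx with h' | h'
          · rw [if_neg (Nat.not_even_iff_odd.2 h)]; exact h'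
          · rw [if_neg (Nat.not_even_iff_odd.2 h)]
            rw [hyv, if_pos (by simp [Nat.even_add_one, Nat.not_even_iff_odd.2 h])] at hxy
            exact absurd h' hxy
      refine ⟨m'', by omega, Or.inl ?_⟩
      rw [hhead, ← hxh, prodW_cons, ← mul_assoc]
      rcases hx with h' | h' <;> subst h'
      · rw [srefl_mul_self A x (h2 x), one_mul]
      · rw [srefl_mul_self A x (h2 x), one_mul]

lemma reduce_bounded (hij : i ≠ j) (h2 : ∀ k, A k k = 2) (mt : ℕ) (hmt : 1 ≤ mt)
    (hbr : prodW A (altW i j mt) = prodW A (altW j i mt)) :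
    ∀ l : List (Fin n), (∀ y ∈ l, y = i ∨ y = j) →
      ∃ m, m ≤ l.length ∧ m ≤ mt ∧
        (prodW A l = prodW A (altW i j m) ∨ prodW A l = prodW A (altW j i m)) := by
  intro l
  induction l with
  | nil => exact fun _ => ⟨0, by simp, by omega, Or.inl rfl⟩
  | cons x l ih =>
    intro hlet
    obtain ⟨m, hm, hmt', hdisj⟩ := ih (fun y hy => hlet y (List.mem_cons_of_mem x hy))
    have hx := hlet x List.mem_cons_self
    rcases hdisj with hd | hd
    · obtain ⟨m', h1, h2', h3⟩ :=
        step_helper A hij h2 mt hmt hbr x hx m hmt'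
      refine ⟨m', by simp; omega, h2', ?_⟩
      rwa [prodW_cons, hd]
    · obtain ⟨m', h1, h2', h3⟩ :=
        step_helper A hij.symm (fun k => h2 k) mt hmt hbr.symm x hx.symm m hmt'
      refine ⟨m', by simp; omega, h2', ?_⟩
      rw [prodW_cons, hd]
      exact h3.symm.imp id id

lemma reduce_free (hij : i ≠ j) (h2 : ∀ k, A k k = 2) :
    ∀ l : List (Fin n), (∀ y ∈ l, y = i ∨ y = j) →
      ∃ m, m ≤ l.length ∧
        (prodW A l = prodW A (altW i j m) ∨ prodW A l = prodW A (altW j i m)) := by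
  intro l
  induction l with
  | nil => exact fun _ => ⟨0, by simp, Or.inl rfl⟩
  | cons x l ih =>
    intro hlet
    obtain ⟨m, hm, hdisj⟩ := ih (fun y hy => hlet y (List.mem_cons_of_mem x hy))
    have hx := hlet x List.mem_cons_self
    rcases hdisj with hd | hd
    · obtain ⟨m', h1, h3⟩ := step_helper_free A hij h2 x hx m
      refine ⟨m', by simp; omega, ?_⟩
      rwa [prodW_cons, hd]
    · obtain ⟨m', h1, h3⟩ := step_helper_free A hij.symm (fun k => h2 k) x hx.symm m
      refine ⟨m', by simp; omega, ?_⟩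
      rw [prodW_cons, hd]
      exact h3.symm.imp id id

end WOG

namespace WOG
variable {n : ℕ} (A : Matrix (Fin n) (Fin n) ℝ)
variable {i j : Fin n}

lemma altW_concat_prod (h2 : ∀ k, A k k = 2) (m : ℕ) (hm : 1 ≤ m) :
    prodW A (altW j i m) * simpleRefl A i = prodW A (altW i j (m - 1)) := by
  have hm' : (m - 1) + 1 = m := by omega
  have h : altW j i m = altW i j (m - 1) ++ [i] := by
    rw [← hm']; exact altW_concat i j (m - 1)
  have hsingle : prodW A [i] = simpleRefl A i := by simp [prodW]
  rw [h, prodW_append, hsingle, mul_assoc, srefl_mul_self A i (h2 i), mul_one]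

lemma dihedral_pos (hA : IsGCM A) (hij : i ≠ j) (x : Function.End (Fin n → ℝ))
    (lx : List (Fin n)) (hlet : ∀ y ∈ lx, y = i ∨ y = j) (hxl : prodW A lx = x)
    (hmin : lx.length ≤ lenD A i j x)
    (hup : lenD A i j x ≤ lenD A i j (x * simpleRefl A i)) :
    ∃ P Q : ℝ, 0 ≤ P ∧ 0 ≤ Q ∧ x (ee i) = P • ee i + Q • ee j := by
  obtain ⟨h2, hoff, hzz⟩ := hA
  have ha : 0 ≤ -A i j := by linarith [(hoff i j hij).1]
  have hb : 0 ≤ -A j i := by linarith [(hoff j i hij.symm).1]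
  obtain ⟨za, hza⟩ := (hoff i j hij).2
  obtain ⟨zb, hzb⟩ := (hoff j i hij.symm).2
  have finish : ∀ m : ℕ, x = prodW A (altW i j m) →
      0 ≤ (PQ (-A i j) (-A j i) m).1 → 0 ≤ (PQ (-A i j) (-A j i) m).2 →
      ∃ P Q : ℝ, 0 ≤ P ∧ 0 ≤ Q ∧ x (ee i) = P • ee i + Q • ee j := by
    intro m hx hP hQ
    exact ⟨_, _, hP, hQ, by rw [hx, altW_apply A i j hij (h2 i) (h2 j) m]⟩
  have contraI : ∀ m : ℕ, 1 ≤ m → m ≤ lx.length → x = prodW A (altW j i m) → False := by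
    intro m hm1 hmlen hx
    have hxs : x * simpleRefl A i = prodW A (altW i j (m - 1)) := by
      rw [hx]; exact altW_concat_prod A (fun k => h2 k) m hm1
    have hle : lenD A i j (x * simpleRefl A i) ≤ (altW i j (m - 1)).length :=
      lenD_le A (altW_letters i j (m - 1)) hxs.symm
    have hlen : (altW i j (m - 1)).length = m - 1 := by
      clear * -
      induction (m - 1) with
      | zero => rfl
      | succ k ih => simp [altW, ih]
    omega
  set N : ℤ := za * zb with hN
  have hNr : (N : ℝ) = A i j * A j i := by rw [hN]; push_cast; rw [hza, hzb]
  have hN0 : 0 ≤ N := by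
    have h0 : (0:ℝ) ≤ (N:ℝ) := by rw [hNr]; nlinarith
    exact_mod_cast h0
  by_cases hbig : 4 ≤ N
  · have ht : 4 ≤ (-A i j) * (-A j i) := by
      have h4 : (4:ℝ) ≤ (N:ℝ) := by exact_mod_cast hbig
      nlinarith [hNr]
    obtain ⟨m, hmlen, hdisj⟩ := reduce_free A hij (fun k => h2 k) lx hlet
    rcases hdisj with hd | hd
    · obtain ⟨hP, hQ⟩ := PQ_nonneg_big (-A i j) (-A j i) ha hb ht m
      exact finish m (hxl ▸ hd) hP hQ
    · rcases Nat.eq_zero_or_pos m with rfl | hm1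
      · exact finish 0 (hxl ▸ hd) (by norm_num [PQ]) (by norm_num [PQ])
      · exact absurd (hxl ▸ hd) fun h => contraI m hm1 hmlen h
  · have hN3 : N ≤ 3 := by omega
    obtain ⟨mt, hmt1, hbr, hsmall⟩ :
        ∃ mt, 1 ≤ mt ∧ prodW A (altW i j mt) = prodW A (altW j i mt) ∧
          ∀ m ≤ mt - 1, 0 ≤ (PQ (-A i j) (-A j i) m).1 ∧ 0 ≤ (PQ (-A i j) (-A j i) m).2 := by
      have hN0' : (0:ℤ) ≤ N := hN0
      interval_cases N
      · -- N = 0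
        have h00 : A i j * A j i = 0 := by rw [← hNr]; norm_num
        have hz : A i j = 0 ∨ A j i = 0 := mul_eq_zero.1 h00
        have hzi : A i j = 0 := by
          rcases hz with h | h
          · exact h
          · exact hzz j i h
        have hzj : A j i = 0 := hzz i j hzi
        refine ⟨2, by omega, braid0 A hij (h2 i) (h2 j) hzi hzj, ?_⟩
        intro m hm
        interval_cases m
        · norm_num [PQ]
        · rw [PQ_one]; exact ⟨by norm_num, by dsimp only; linarith⟩
      · -- N = 1
        have hab : A i j * A j i = 1 := by rw [← hNr]; norm_num
        have hab' : (-A i j) * (-A j i) = 1 := by linarith [hab]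
        refine ⟨3, by omega, braid1 A hij (h2 i) (h2 j) hab, ?_⟩
        intro m hm
        interval_cases m
        · norm_num [PQ]
        · rw [PQ_one]; exact ⟨by norm_num, by dsimp only; linarith⟩
        · rw [PQ_two]; exact ⟨by dsimp only; nlinarith [hab'], by dsimp only; linarith⟩
      · -- N = 2
        have hab : A i j * A j i = 2 := by rw [← hNr]; norm_num
        have hab' : (-A i j) * (-A j i) = 2 := by linarith [hab]
        refine ⟨4, by omega, braid2 A hij (h2 i) (h2 j) hab, ?_⟩
        intro m hm
        interval_cases m
        · norm_num [PQ]
        · rw [PQ_one]; exact ⟨by norm_num, by dsimp only; linarith⟩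
        · rw [PQ_two]; exact ⟨by dsimp only; nlinarith [hab'], by dsimp only; linarith⟩
        · rw [PQ_three]
          refine ⟨by dsimp only; nlinarith [hab'], ?_⟩
          dsimp only
          have : (-A j i) * ((-A i j) * (-A j i) - 1) - (-A j i) = (-A j i) * ((-A i j) * (-A j i) - 2) := by ring
          rw [this, hab']
          norm_num
      · -- N = 3
        have hab : A i j * A j i = 3 := by rw [← hNr]; norm_num
        have hab' : (-A i j) * (-A j i) = 3 := by linarith [hab]
        refine ⟨6, by omega, braid3 A hij (h2 i) (h2 j) hab, ?_⟩
        intro m hm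
        set a := -A i j with hadef
        set b := -A j i with hbdef
        have e3 : b * (a * b - 1) - b = b := by linear_combination b * hab'
        have e4 : a * (b * (a * b - 1) - b) - (a * b - 1) = 1 := by
          linear_combination (a * b) * hab'
        have e5 : b * (a * (b * (a * b - 1) - b) - (a * b - 1)) - (b * (a * b - 1) - b) = 0 := by
          linear_combination (b * (a * b - 1)) * hab'
        interval_cases m
        · norm_num [PQ]
        · rw [PQ_one]; exact ⟨by norm_num, by dsimp only; linarith⟩
        · rw [PQ_two]; exact ⟨by dsimp only; nlinarith [hab'], by dsimp only; linarith⟩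
        · rw [PQ_three]
          exact ⟨by dsimp only; nlinarith [hab'], by dsimp only; rw [e3]; linarith⟩
        · rw [PQ_four]
          exact ⟨by dsimp only; rw [e4]; norm_num, by dsimp only; rw [e3]; linarith⟩
        · rw [PQ_five]
          exact ⟨by dsimp only; rw [e4]; norm_num, by dsimp only; rw [e5]⟩
    obtain ⟨m, hmlen, hmmt, hdisj⟩ := reduce_bounded A hij (fun k => h2 k) mt hmt1 hbr lx hlet
    rcases hdisj with hd | hd
    · by_cases hmtt : m = mt
      · subst hmtt
        have hd' : x = prodW A (altW j i m) := by rw [← hxl, hd, hbr]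
        exact absurd hd' fun h => contraI m hmt1 hmlen h
      · obtain ⟨hP, hQ⟩ := hsmall m (by omega)
        exact finish m (hxl ▸ hd) hP hQ
    · rcases Nat.eq_zero_or_pos m with rfl | hm1
      · exact finish 0 (hxl ▸ hd) (by norm_num [PQ]) (by norm_num [PQ])
      · exact absurd (hxl ▸ hd) fun h => contraI m hm1 hmlen h

end WOG

namespace WOG
variable {n : ℕ} (A : Matrix (Fin n) (Fin n) ℝ)

lemma prodW_single (i : Fin n) : prodW A [i] = simpleRefl A i := by simp [prodW]

lemma exists_reducedD (i j : Fin n) {w : Function.End (Fin n → ℝ)}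
    (h : ∃ l : List (Fin n), (∀ y ∈ l, y = i ∨ y = j) ∧ prodW A l = w) :
    ∃ l : List (Fin n), (∀ y ∈ l, y = i ∨ y = j) ∧ l.length = lenD A i j w ∧ prodW A l = w := by
  obtain ⟨l, hl1, hl2⟩ := h
  have hne : {m | ∃ l : List (Fin n), (∀ y ∈ l, y = i ∨ y = j) ∧ l.length = m ∧
      prodW A l = w}.Nonempty := ⟨l.length, l, hl1, rfl, hl2⟩
  obtain ⟨l', h1, h2, h3⟩ := Nat.sInf_mem hne
  exact ⟨l', h1, h2, h3⟩

lemma key (hA : IsGCM A) :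
    ∀ L : ℕ, ∀ w : Function.End (Fin n → ℝ), (∃ l, prodW A l = w) → len A w ≤ L →
      ∀ i : Fin n, len A w ≤ len A (w * simpleRefl A i) →
      ∀ k : Fin n, 0 ≤ w (ee i) k := by
  intro L
  induction L with
  | zero =>
    intro w hw hL i _ k
    obtain ⟨l, hlen, hprod⟩ := exists_reduced A hw
    have hnil : l = [] := List.length_eq_zero_iff.1 (by omega)
    subst hnil
    have h1 : w (ee i) = ee i := by rw [← hprod, prodW_nil]; rfl
    rw [h1, ee, Pi.single_apply]
    split <;> norm_num
  | succ L IH =>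
    intro w hw hL i hup k
    rcases Nat.lt_or_ge (len A w) (L + 1) with h | h
    · exact IH w hw (by omega) i hup k
    · have hlen : len A w = L + 1 := by omega
      obtain ⟨l, hllen, hlprod⟩ := exists_reduced A hw
      rcases List.eq_nil_or_concat l with rfl | ⟨l₁, j0, rfl⟩
      · rw [List.length_nil] at hllen; omega
      rw [List.concat_eq_append] at hllen hlprod
      have hl1len : l₁.length = L := by
        simp only [List.length_append, List.length_singleton] at hllen; omega
      have hwj0 : w * simpleRefl A j0 = prodW A l₁ := by
        rw [← hlprod, prodW_append, prodW_single, mul_assoc,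
          srefl_mul_self A j0 (hA.1 j0), mul_one]
      have hj0 : j0 ≠ i := by
        intro hh; subst hh
        have h1 : len A (w * simpleRefl A j0) ≤ L := by
          rw [hwj0]
          exact le_trans (len_le A rfl) (le_of_eq hl1len)
        omega
      set B : Set ℕ := {m | ∃ lv lx : List (Fin n), lv.length = m ∧
        (∀ y ∈ lx, y = i ∨ y = j0) ∧ prodW A lv * prodW A lx = w ∧
        m + lx.length = L + 1} with hB
      have hBmem : l₁.length ∈ B := by
        refine ⟨l₁, [j0], rfl, ?_, ?_, by simp [hl1len]⟩
        · intro y hy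
          simp only [List.mem_singleton] at hy
          exact Or.inr hy
        · rw [← prodW_append, hlprod]
      obtain ⟨lv, lx, hlvlen, hlxlet, hvx, hsum⟩ := Nat.sInf_mem ⟨l₁.length, hBmem⟩
      set M := sInf B with hM
      have hMle : M ≤ L := le_trans (Nat.sInf_le hBmem) (le_of_eq hl1len)
      have hlenw_le : ∀ lv' lx' : List (Fin n), prodW A lv' * prodW A lx' = w →
          L + 1 ≤ lv'.length + lx'.length := by
        intro lv' lx' hp
        have hpw : prodW A (lv' ++ lx') = w := by rw [prodW_append, hp]
        have := len_le A hpw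
        rw [List.length_append] at this; omega
      have hlenv : M ≤ len A (prodW A lv) := by
        by_contra hc; push_neg at hc
        obtain ⟨mv, hmvlen, hmvprod⟩ := exists_reduced A ⟨lv, rfl⟩
        have := hlenw_le mv lx (by rw [hmvprod]; exact hvx)
        omega
      have hlenv_eq : len A (prodW A lv) = M := by
        have h2 : len A (prodW A lv) ≤ lv.length := len_le A rfl
        omega
      have hvup : ∀ i' : Fin n, (i' = i ∨ i' = j0) →
          len A (prodW A lv) ≤ len A (prodW A lv * simpleRefl A i') := by
        intro i' hi'
        by_contra hc; push_neg at hc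
        obtain ⟨mv, hmvlen, hmvprod⟩ :=
          exists_reduced A (w := prodW A lv * simpleRefl A i')
            ⟨lv ++ [i'], by rw [prodW_append, prodW_single]⟩
        have hnew : prodW A mv * prodW A (i' :: lx) = w := by
          rw [hmvprod, prodW_cons, ← mul_assoc, mul_assoc _ _ (simpleRefl A i'),
            srefl_mul_self A i' (hA.1 i'), mul_one]
          exact hvx
        have hge := hlenw_le mv (i' :: lx) hnew
        rw [List.length_cons] at hge
        have hlt : mv.length < M := by omega
        have hmem : mv.length ∈ B := by
          refine ⟨mv, i' :: lx, rfl, ?_, hnew, ?_⟩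
          · intro y hy
            rcases List.mem_cons.1 hy with h' | h'
            · rcases hi' with h'' | h'' <;> [exact Or.inl (h'.trans h''); exact Or.inr (h'.trans h'')]
            · exact hlxlet y h'
          · simp only [List.length_cons]; omega
        have := Nat.sInf_le hmem
        omega
      have hlxmin : lx.length ≤ lenD A i j0 (prodW A lx) := by
        by_contra hc; push_neg at hc
        obtain ⟨l', hl'let, hl'len, hl'prod⟩ :=
          exists_reducedD A i j0 ⟨lx, hlxlet, rfl⟩
        have := hlenw_le lv l' (by rw [hl'prod]; exact hvx)
        omega
      have hupD : lenD A i j0 (prodW A lx) ≤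
          lenD A i j0 (prodW A lx * simpleRefl A i) := by
        by_contra hc; push_neg at hc
        obtain ⟨l', hl'let, hl'len, hl'prod⟩ :=
          exists_reducedD A i j0 (w := prodW A lx * simpleRefl A i)
            ⟨lx ++ [i], by
              constructor
              · intro y hy
                rcases List.mem_append.1 hy with h' | h'
                · exact hlxlet y h'
                · simp only [List.mem_singleton] at h'; exact Or.inl h'
              · rw [prodW_append, prodW_single]⟩
        have hw' : prodW A (lv ++ l') = w * simpleRefl A i := by
          rw [prodW_append, hl'prod, ← mul_assoc, hvx]
        have h1 := len_le A hw'
        rw [List.length_append] at h1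
        have hd : lenD A i j0 (prodW A lx) ≤ lx.length := lenD_le A hlxlet rfl
        omega
      have hijne : i ≠ j0 := fun hh => hj0 hh.symm
      obtain ⟨P, Q, hP, hQ, hxe⟩ :=
        dihedral_pos A hA hijne (prodW A lx) lx hlxlet rfl hlxmin hupD
      have hvi := IH (prodW A lv) ⟨lv, rfl⟩ (by omega) i (hvup i (Or.inl rfl))
      have hvj := IH (prodW A lv) ⟨lv, rfl⟩ (by omega) j0 (hvup j0 (Or.inr rfl))
      have hw_apply : w (ee i) = prodW A lv (prodW A lx (ee i)) := by rw [← hvx]; rfl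
      have hlin : prodW A lv (P • ee i + Q • ee j0)
          = P • prodW A lv (ee i) + Q • prodW A lv (ee j0) := by
        rw [prodW_add, prodW_smul, prodW_smul]
      rw [hw_apply, hxe, hlin]
      simp only [Pi.add_apply, Pi.smul_apply, smul_eq_mul]
      have h1 := hvi k
      have h2 := hvj k
      have := mul_nonneg hP h1
      have := mul_nonneg hQ h2
      linarith

end WOG

namespace WOG
variable {n : ℕ} (A : Matrix (Fin n) (Fin n) ℝ)

lemma exists_word {w : Function.End (Fin n → ℝ)} (hw : w ∈ weylGroup A) :
    ∃ l : List (Fin n), prodW A l = w := by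
  obtain ⟨lf, hlf, hprod⟩ := Submonoid.exists_list_of_mem_closure hw
  clear hw
  induction lf generalizing w with
  | nil => exact ⟨[], by rw [← hprod]; rfl⟩
  | cons f lf ih =>
    obtain ⟨i, hi⟩ := hlf f List.mem_cons_self
    obtain ⟨l', hl'⟩ := ih (w := lf.prod) (fun y hy => hlf y (List.mem_cons_of_mem _ hy)) rfl
    exact ⟨i :: l', by rw [prodW_cons, hl', ← hprod, List.prod_cons, hi]⟩

lemma main_reduced (hA : IsGCM A) (lam : Fin n → ℝ) (hlam : ∀ i, A.mulVec lam i ≤ 0) :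
    ∀ l : List (Fin n), l.length = len A (prodW A l) →
      ∀ k, 0 ≤ (prodW A l lam - lam) k := by
  intro l
  induction l using List.reverseRecOn with
  | nil =>
    intro _ k
    have h1 : prodW A [] lam = lam := rfl
    rw [h1]
    simp
  | append_singleton l₁ m ih =>
    intro hred k
    have hlen1 : l₁.length = len A (prodW A l₁) := by
      have h1 : len A (prodW A l₁) ≤ l₁.length := len_le A rfl
      obtain ⟨mv, hmvlen, hmvprod⟩ := exists_reduced A (w := prodW A l₁) ⟨l₁, rfl⟩
      have h2 : prodW A (mv ++ [m]) = prodW A (l₁ ++ [m]) := by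
        rw [prodW_append, prodW_append, hmvprod]
      have h3 := len_le A h2
      rw [List.length_append, List.length_singleton] at h3
      rw [List.length_append, List.length_singleton] at hred
      omega
    have hup : len A (prodW A l₁) ≤ len A (prodW A l₁ * simpleRefl A m) := by
      have he : prodW A l₁ * simpleRefl A m = prodW A (l₁ ++ [m]) := by
        rw [prodW_append, prodW_single]
      rw [he, ← hred]
      rw [List.length_append, List.length_singleton]
      omega
    have hkey := key A hA l₁.length (prodW A l₁) ⟨l₁, rfl⟩ (len_le A rfl) m hup
    have hsig : simpleRefl A m lam = lam + (-(A.mulVec lam m)) • ee m := by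
      funext k'
      show lam k' - _ = _
      simp [ee]
      ring
    have htel : prodW A (l₁ ++ [m]) lam
        = prodW A l₁ lam + (-(A.mulVec lam m)) • prodW A l₁ (ee m) := by
      have he : prodW A (l₁ ++ [m]) lam = prodW A l₁ (simpleRefl A m lam) := by
        rw [prodW_append, prodW_single]; rfl
      rw [he, hsig, prodW_add, prodW_smul]
    rw [htel]
    have hc : 0 ≤ -(A.mulVec lam m) := by linarith [hlam m]
    have hterm := mul_nonneg hc (hkey k)
    have hih := ih hlen1 k
    simp only [Pi.sub_apply, Pi.add_apply, Pi.smul_apply, smul_eq_mul] at *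
    linarith

end WOG


theorem weyl_orbit_ge
    {n : ℕ} (A : Matrix (Fin n) (Fin n) ℝ) (hA : IsGCM A)
    (lam : Fin n → ℝ) (hlam : ∀ i, A.mulVec lam i ≤ 0) :
    ∀ w ∈ weylGroup A, ∀ i, 0 ≤ (w lam - lam) i := by

  intro w hw i
  obtain ⟨l0, hl0⟩ := WOG.exists_word A hw
  obtain ⟨l, hllen, hlprod⟩ := WOG.exists_reduced A (w := w) ⟨l0, hl0⟩
  have hmain := WOG.main_reduced A hA lam hlam l (by rw [hlprod]; exact hllen) i
  rwa [hlprod] at hmain
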